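/- Let R be a DVR with uniformizer π, n ≥ 0, and ℰ an R-flat coherent sheaf on X_R. There is a natural bijection between: (1) descending chains ℰ_n ⊂ ⋯ ⊂ ℰ_1 ⊂ ℰ_0 = ℰ in which each ℰ_{i+1} is the elementary modification of ℰ_i along a quotient ℰ_{i,ξ} ↠ Q_i and each composite Q_i → ℰ_{i+1,ξ} → Q_{i+1} (first map induced by multiplication by π) is an isomorphism; and (2) quotients ℰ ⊗_R R/(πⁿ) → 𝒬_n that are flat over R/(πⁿ). The bijection sends a chain to ℰ/ℰ_n, and conversely a flat quotient 𝒬_n to the chain ℰ_i := preimage of π^i𝒬_n under ℰ → 𝒬_n. -/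

import Mathlib

/-!
STATEMENT 7.
Let `R` be a DVR with uniformizer `π`, `n ≥ 0`, and `ℰ` an `R`-flat coherent sheaf on `X_R`.
There is a natural bijection between:
(1) descending chains `ℰ_n ⊆ ⋯ ⊆ ℰ_1 ⊆ ℰ_0 = ℰ` in which each `ℰ_{i+1}` is the elementary
    modification of `ℰ_i` along a quotient `ℰ_{i,ξ} ↠ Q_i` (equivalently
    `πℰ_i ⊆ ℰ_{i+1} ⊆ ℰ_i`, with `Q_i = ℰ_i/ℰ_{i+1}`), such that each composite
    `Q_i → ℰ_{i+1,ξ} → Q_{i+1}` (first map induced by multiplication by `π`) is an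
    isomorphism — elementwise: multiplication by `π` induces a bijection
    `ℰ_i/ℰ_{i+1} → ℰ_{i+1}/ℰ_{i+2}` for `0 ≤ i ≤ n-2`; and
(2) quotients `ℰ ⊗_R R/(πⁿ) ↠ 𝒬_n` flat over `R/(πⁿ)` — encoded by their kernels, i.e.
    submodules `N ⊇ πⁿℰ`, flatness of `ℰ/N` over `R/(πⁿ)` being expressed by the local
    flatness criterion (stated in the context): multiplication by `π` induces bijections
    `π^i𝒬/π^{i+1}𝒬 → π^{i+1}𝒬/π^{i+2}𝒬` for `0 ≤ i ≤ n-2`, where `π^i𝒬` corresponds to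
    `π^iℰ + N ⊆ ℰ`.
The bijection sends a chain to `ℰ/ℰ_n` (i.e. to `N = ℰ_n`) and a flat quotient `𝒬` to the
chain of preimages `ℰ_i = preimage of π^i𝒬`, i.e. `ℰ_i = π^iℰ + N`.

Encoding (affine-locally): `ℰ` is an `A`-module `M` flat over `R`, where `A` is an
`R`-algebra, and `J = (π) ⊆ A`.
-/

open Submodule

/-- Condition (1): a chain of elementary modifications with the isomorphism condition on the
successive quotients. -/
def IsModificationChain {A M : Type*} [CommRing A] [AddCommGroup M] [Module A M]
    (J : Ideal A) (π' : A) (n : ℕ) (E : Fin (n + 1) → Submodule A M) : Prop :=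
  E 0 = ⊤ ∧
  (∀ (i : ℕ) (h : i < n),
      E ⟨i + 1, by omega⟩ ≤ E ⟨i, by omega⟩ ∧ J • E ⟨i, by omega⟩ ≤ E ⟨i + 1, by omega⟩) ∧
  (∀ (i : ℕ) (h : i + 2 ≤ n),
      (∀ x ∈ E ⟨i + 1, by omega⟩, ∃ y ∈ E ⟨i, by omega⟩, x - π' • y ∈ E ⟨i + 2, by omega⟩) ∧
      (∀ y ∈ E ⟨i, by omega⟩, π' • y ∈ E ⟨i + 2, by omega⟩ → y ∈ E ⟨i + 1, by omega⟩))

/-- Condition (2): `N` is the kernel of a quotient of `M/πⁿM` which is flat over `R/(πⁿ)`,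
flatness being expressed via the local flatness criterion. -/
def IsFlatQuotientKernel {A M : Type*} [CommRing A] [AddCommGroup M] [Module A M]
    (J : Ideal A) (π' : A) (n : ℕ) (N : Submodule A M) : Prop :=
  J ^ n • (⊤ : Submodule A M) ≤ N ∧
  (∀ (i : ℕ), i + 2 ≤ n →
      (∀ x ∈ J ^ (i + 1) • (⊤ : Submodule A M) ⊔ N,
        ∃ y ∈ J ^ i • (⊤ : Submodule A M) ⊔ N, x - π' • y ∈ J ^ (i + 2) • (⊤ : Submodule A M) ⊔ N) ∧
      (∀ y ∈ J ^ i • (⊤ : Submodule A M) ⊔ N,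
        π' • y ∈ J ^ (i + 2) • (⊤ : Submodule A M) ⊔ N → y ∈ J ^ (i + 1) • (⊤ : Submodule A M) ⊔ N))

section Aux
variable {A M : Type*} [CommRing A] [AddCommGroup M] [Module A M]
variable {J : Ideal A} {π' : A} {n : ℕ} {E : Fin (n + 1) → Submodule A M}

lemma pow_smul_top_succ (J : Ideal A) (i : ℕ) :
    J ^ (i + 1) • (⊤ : Submodule A M) = J • (J ^ i • (⊤ : Submodule A M)) := by
  rw [pow_succ', mul_smul]

/-- In a chain, `J^i • ⊤ ≤ E i`. -/
lemma chain_pow_le (hE : IsModificationChain J π' n E) :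
    ∀ i (h : i ≤ n), J ^ i • (⊤ : Submodule A M) ≤ E ⟨i, by omega⟩ := by
  intro i
  induction i with
  | zero =>
    intro h
    rw [pow_zero, one_smul, Fin.mk_zero, hE.1]
  | succ i ih =>
    intro h
    rw [pow_smul_top_succ]
    calc J • (J ^ i • (⊤ : Submodule A M)) ≤ J • E ⟨i, by omega⟩ :=
          smul_mono_right _ (ih (by omega))
      _ ≤ E ⟨i + 1, by omega⟩ := (hE.2.1 i (by omega)).2

/-- The chain is descending. -/
lemma chain_anti (hE : IsModificationChain J π' n E) :
    ∀ d i (h : i + d ≤ n), E ⟨i + d, by omega⟩ ≤ E ⟨i, by omega⟩ := by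
  intro d
  induction d with
  | zero => intro i h; exact le_refl _
  | succ d ih =>
    intro i h
    have h1 : E ⟨i + d + 1, by omega⟩ ≤ E ⟨i + d, by omega⟩ := (hE.2.1 (i + d) (by omega)).1
    have h2 : (⟨i + (d + 1), by omega⟩ : Fin (n + 1)) = ⟨i + d + 1, by omega⟩ := by
      simp only [Fin.mk.injEq]; omega
    rw [h2]
    exact h1.trans (ih i (by omega))

lemma chain_en_le (hE : IsModificationChain J π' n E) {i : ℕ} (h : i ≤ n) :
    E ⟨n, by omega⟩ ≤ E ⟨i, by omega⟩ := by
  have h2 : (⟨n, by omega⟩ : Fin (n + 1)) = ⟨i + (n - i), by omega⟩ := by simp only [Fin.mk.injEq]; omega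
  rw [h2]
  exact chain_anti hE (n - i) i (by omega)

/-- Descending induction step: `E j ≤ J • E (j-1) ⊔ E n`. -/
lemma chain_step (hπJ : π' ∈ J) (hE : IsModificationChain J π' n E) :
    ∀ d j (h : j + 1 + d = n),
      E ⟨j + 1, by omega⟩ ≤ J • E ⟨j, by omega⟩ ⊔ E ⟨n, by omega⟩ := by
  intro d
  induction d with
  | zero =>
    intro j h
    have h2 : (⟨j + 1, by omega⟩ : Fin (n + 1)) = ⟨n, by omega⟩ := by simp only [Fin.mk.injEq]; omega
    rw [h2]; exact le_sup_right
  | succ d ih =>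
    intro j h
    intro x hx
    obtain ⟨y, hy, hz⟩ := (hE.2.2 j (by omega)).1 x hx
    have h1 : π' • y ∈ J • E ⟨j, by omega⟩ ⊔ E ⟨n, by omega⟩ :=
      Submodule.mem_sup_left (Submodule.smul_mem_smul hπJ hy)
    have h2 : x - π' • y ∈ J • E ⟨j, by omega⟩ ⊔ E ⟨n, by omega⟩ := by
      have h3 := ih (j + 1) (by omega) hz
      have h4 : J • E ⟨j + 1, by omega⟩ ≤ J • E ⟨j, by omega⟩ :=
        smul_mono_right _ (hE.2.1 j (by omega)).1
      exact (sup_le_sup_right h4 _) h3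
    have hx2 : x = π' • y + (x - π' • y) := by abel
    rw [hx2]
    exact add_mem h1 h2

end Aux

section Aux2
variable {A M : Type*} [CommRing A] [AddCommGroup M] [Module A M]
variable {J : Ideal A} {π' : A} {n : ℕ} {E : Fin (n + 1) → Submodule A M}

lemma chain_smul_en_le (hE : IsModificationChain J π' n E) (hn : 1 ≤ n) :
    J • E ⟨n, by omega⟩ ≤ E ⟨n, by omega⟩ := by
  have h1 : E ⟨n, by omega⟩ ≤ E ⟨n - 1, by omega⟩ := chain_en_le hE (by omega)
  have h2 : J • E ⟨n - 1, by omega⟩ ≤ E ⟨n - 1 + 1, by omega⟩ := (hE.2.1 (n - 1) (by omega)).2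
  have h3 : (⟨n - 1 + 1, by omega⟩ : Fin (n + 1)) = ⟨n, by omega⟩ := by
    simp only [Fin.mk.injEq]; omega
  exact (smul_mono_right _ h1).trans (h3 ▸ h2)

/-- Key identity: `E i = J^i • ⊤ ⊔ E n`. -/
lemma chain_eq (hπJ : π' ∈ J) (hE : IsModificationChain J π' n E) :
    ∀ i (h : i ≤ n), E ⟨i, by omega⟩ = J ^ i • (⊤ : Submodule A M) ⊔ E ⟨n, by omega⟩ := by
  intro i
  induction i with
  | zero =>
    intro h
    rw [Fin.mk_zero, hE.1, pow_zero, one_smul, top_sup_eq]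
  | succ i ih =>
    intro h
    apply le_antisymm
    · have hstep := chain_step hπJ hE (n - (i + 1)) i (by omega)
      refine hstep.trans ?_
      have hJEn := chain_smul_en_le hE (by omega)
      calc J • E ⟨i, by omega⟩ ⊔ E ⟨n, by omega⟩
          ≤ J • (J ^ i • (⊤ : Submodule A M) ⊔ E ⟨n, by omega⟩) ⊔ E ⟨n, by omega⟩ :=
            sup_le_sup_right (smul_mono_right _ (le_of_eq (ih (by omega)))) _
        _ = (J ^ (i + 1) • (⊤ : Submodule A M) ⊔ J • E ⟨n, by omega⟩) ⊔ E ⟨n, by omega⟩ := by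
            rw [Submodule.smul_sup, pow_smul_top_succ]
        _ ≤ J ^ (i + 1) • (⊤ : Submodule A M) ⊔ E ⟨n, by omega⟩ := by
            rw [sup_assoc]
            exact sup_le_sup_left (sup_le hJEn le_rfl) _
    · exact sup_le (chain_pow_le hE (i + 1) h) (chain_en_le hE (by omega))

lemma chain_to_flat (hπJ : π' ∈ J) (hE : IsModificationChain J π' n E) :
    IsFlatQuotientKernel J π' n (E (Fin.last n)) := by
  have hlast : E (Fin.last n) = E ⟨n, by omega⟩ := rfl
  constructor
  · rw [hlast]; exact chain_pow_le hE n le_rfl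
  · intro i hi
    have e0 := chain_eq hπJ hE i (by omega)
    have e1 := chain_eq hπJ hE (i + 1) (by omega)
    have e2 := chain_eq hπJ hE (i + 2) (by omega)
    rw [hlast, ← e0, ← e1, ← e2]
    exact hE.2.2 i hi

lemma flat_to_chain (N : Submodule A M) (hN : IsFlatQuotientKernel J π' n N) :
    IsModificationChain J π' n
      (fun i : Fin (n + 1) => J ^ (i : ℕ) • (⊤ : Submodule A M) ⊔ N) := by
  refine ⟨?_, ?_, ?_⟩
  · show J ^ ((0 : Fin (n + 1)) : ℕ) • (⊤ : Submodule A M) ⊔ N = ⊤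
    simp
  · intro i h
    constructor
    · show J ^ (i + 1) • (⊤ : Submodule A M) ⊔ N ≤ J ^ i • (⊤ : Submodule A M) ⊔ N
      exact sup_le_sup_right (Submodule.smul_mono_left (Ideal.pow_le_pow_right (by omega))) _
    · show J • (J ^ i • (⊤ : Submodule A M) ⊔ N) ≤ J ^ (i + 1) • (⊤ : Submodule A M) ⊔ N
      rw [Submodule.smul_sup]
      refine sup_le_sup (le_of_eq (pow_smul_top_succ J i).symm) ?_
      exact (Submodule.smul_mono_left le_top).trans (le_of_eq (Submodule.top_smul N))
  · intro i h
    exact hN.2 i h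

end Aux2

theorem chains_of_modifications_equiv_flat_quotients
    {R : Type*} [CommRing R] [IsDomain R] [IsDiscreteValuationRing R]
    {A : Type*} [CommRing A] [Algebra R A]
    (π : R) (hπ : Irreducible π)
    {M : Type*} [AddCommGroup M] [Module R M] [Module A M] [IsScalarTower R A M]
    [Module.Flat R M]
    (n : ℕ) :
    ∃ e : {E : Fin (n + 1) → Submodule A M //
            IsModificationChain (Ideal.span {algebraMap R A π}) (algebraMap R A π) n E} ≃
          {N : Submodule A M //
            IsFlatQuotientKernel (Ideal.span {algebraMap R A π}) (algebraMap R A π) n N},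
      -- the chain `ℰ_•` is sent to the quotient `ℰ/ℰ_n`, i.e. to `N = ℰ_n`
      (∀ E, (e E : Submodule A M) = E.1 (Fin.last n)) ∧
      -- the flat quotient with kernel `N` is sent to the chain `ℰ_i = π^iℰ + N`
      (∀ N (i : Fin (n + 1)),
        (e.symm N : Fin (n + 1) → Submodule A M) i
          = Ideal.span {algebraMap R A π} ^ (i : ℕ) • (⊤ : Submodule A M) ⊔ (N : Submodule A M)) := by
  have hπJ : algebraMap R A π ∈ Ideal.span {algebraMap R A π} := Ideal.subset_span rfl
  refine ⟨⟨fun E => ⟨E.1 (Fin.last n), chain_to_flat hπJ E.2⟩,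
          fun N => ⟨fun i => Ideal.span {algebraMap R A π} ^ (i : ℕ) • (⊤ : Submodule A M) ⊔ N.1,
            flat_to_chain N.1 N.2⟩, ?_, ?_⟩, ?_, ?_⟩
  · intro E
    apply Subtype.ext
    funext i
    exact (chain_eq hπJ E.2 i (Fin.is_le i)).symm
  · intro N
    apply Subtype.ext
    show Ideal.span {algebraMap R A π} ^ ((Fin.last n : Fin (n + 1)) : ℕ) •
        (⊤ : Submodule A M) ⊔ N.1 = N.1
    exact sup_eq_right.mpr N.2.1
  · intro E; rfl
  · intro N i; rfl
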